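/- For each n ≥ 0 and all real x, the (2n+1)-th derivative of arctan at x equals (-1)^n · (2n)! / (1+x²)^{n+1/2} · T_{2n+1}(1/√(1+x²)). -/

import Mathlib

open Finset Polynomial Real

lemma arctan_deriv_formula (m : ℕ) : ∀ x : ℝ,
    iteratedDeriv (m + 1) Real.arctan x =
      (m.factorial : ℝ) * (1 + x ^ 2) ^ (-(((m : ℝ) + 1) / 2)) *
        Real.sin (((m : ℝ) + 1) * (π / 2 + Real.arctan x)) := by
  induction m with
  | zero =>
    intro x
    have hc : (0:ℝ) < 1 + x ^ 2 := by positivity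
    have hs : (0:ℝ) < Real.sqrt (1 + x ^ 2) := Real.sqrt_pos.mpr hc
    have h1 : iteratedDeriv 1 Real.arctan x = 1 / (1 + x ^ 2) := by
      rw [iteratedDeriv_one, Real.deriv_arctan]
    rw [h1]
    simp only [Nat.cast_zero, Nat.factorial_zero, Nat.cast_one, zero_add, one_mul]
    rw [show π/2 + Real.arctan x = Real.arctan x + π/2 by ring, Real.sin_add_pi_div_two, Real.cos_arctan]
    rw [show -((1:ℝ)/2) = (-1) * (1/2) by ring, Real.rpow_mul hc.le,
      Real.rpow_neg_one, ← Real.sqrt_eq_rpow]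
    rw [Real.sqrt_inv, ← one_div, div_mul_div_comm, one_mul, Real.mul_self_sqrt hc.le, one_div]
  | succ m ih =>
    intro x
    have hc : (0:ℝ) < 1 + x ^ 2 := by positivity
    have hs : (0:ℝ) < Real.sqrt (1 + x ^ 2) := Real.sqrt_pos.mpr hc
    set r : ℝ := -(((m:ℝ) + 1) / 2) with hr
    have hfun : iteratedDeriv (m + 1) Real.arctan =
        fun y => (m.factorial : ℝ) * ((1 + y ^ 2) ^ r *
          Real.sin (((m:ℝ) + 1) * (π / 2 + Real.arctan y))) := by
      funext y; rw [ih y]; ring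
    rw [iteratedDeriv_succ, hfun]
    have h2 : HasDerivAt (fun y : ℝ => 1 + y ^ 2) (2 * x) x := by
      simpa using (hasDerivAt_pow 2 x).const_add 1
    have hrpow : HasDerivAt (fun y : ℝ => (1 + y ^ 2) ^ r)
        (r * (1 + x ^ 2) ^ (r - 1) * (2 * x)) x := by
      have := h2.rpow_const (p := r) (Or.inl hc.ne')
      convert this using 1; ring
    have hA : HasDerivAt (fun y : ℝ => ((m:ℝ) + 1) * (π / 2 + Real.arctan y))
        (((m:ℝ) + 1) * (1 / (1 + x ^ 2))) x :=
      ((Real.hasDerivAt_arctan x).const_add (π / 2)).const_mul _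
    have hsin := hA.sin
    have hprod : HasDerivAt (fun y => (m.factorial : ℝ) * ((1 + y ^ 2) ^ r *
        Real.sin (((m:ℝ) + 1) * (π / 2 + Real.arctan y)))) _ x :=
      (hrpow.mul hsin).const_mul (m.factorial : ℝ)
    rw [hprod.deriv]
    have hθs : Real.sin (Real.arctan x) = x / Real.sqrt (1 + x ^ 2) := Real.sin_arctan x
    have hθc : Real.cos (Real.arctan x) = 1 / Real.sqrt (1 + x ^ 2) := Real.cos_arctan x
    push_cast [Nat.factorial_succ]
    have hsplit : (((m:ℝ) + 1) + 1) * (π / 2 + Real.arctan x)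
        = ((m:ℝ) + 1) * (π / 2 + Real.arctan x) + π / 2 + Real.arctan x := by ring
    have hsinA2 : Real.sin ((((m:ℝ) + 1) + 1) * (π / 2 + Real.arctan x))
        = (Real.cos (((m:ℝ)+1) * (π/2 + Real.arctan x))
            - x * Real.sin (((m:ℝ)+1)*(π/2+Real.arctan x))) / Real.sqrt (1+x^2) := by
      rw [hsplit, Real.sin_add]
      rw [show ((m:ℝ)+1) * (π/2 + Real.arctan x) + π/2
          = ((m:ℝ)+1) * (π/2 + Real.arctan x) + π/2 from rfl]
      rw [Real.sin_add_pi_div_two, Real.cos_add_pi_div_two, hθs, hθc]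
      field_simp
      ring
    rw [hsinA2]
    have hcr : (1 + x^2) ^ r = (1 + x^2) ^ (r - 1) * (1 + x^2) := by
      rw [← Real.rpow_add_one hc.ne' (r-1)]; norm_num
    have hexp : -(((m:ℝ) + 1 + 1) / 2) = (r - 1) + 1/2 := by rw [hr]; ring
    rw [hexp, Real.rpow_add hc, ← Real.sqrt_eq_rpow, hcr, hr]
    field_simp
    ring

theorem arctan_odd_deriv_chebyshevT (n : ℕ) (x : ℝ) :
    iteratedDeriv (2 * n + 1) Real.arctan x =
      (-1 : ℝ)^n * (2 * n).factorial / ((1 + x^2)^n * Real.sqrt (1 + x^2)) *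
        (Polynomial.Chebyshev.T ℝ (2 * n + 1)).eval (1 / Real.sqrt (1 + x^2)) := by
  have hc : (0:ℝ) < 1 + x ^ 2 := by positivity
  have hs : (0:ℝ) < Real.sqrt (1 + x ^ 2) := Real.sqrt_pos.mpr hc
  rw [arctan_deriv_formula (2*n) x]
  have hT : (Polynomial.Chebyshev.T ℝ (2 * n + 1)).eval (1 / Real.sqrt (1 + x^2))
      = Real.cos (((2*n+1 : ℤ) : ℝ) * Real.arctan x) := by
    rw [← Real.cos_arctan, Polynomial.Chebyshev.T_real_cos]
  rw [hT]
  have harg : (((2*n : ℕ):ℝ) + 1) * (π / 2 + Real.arctan x)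
      = ((2*(n:ℝ)+1) * Real.arctan x + π/2) + (n:ℕ) * π := by push_cast; ring
  rw [harg, Real.sin_add_nat_mul_pi, Real.sin_add_pi_div_two]
  have hrp : (1 + x^2 : ℝ) ^ (-((((2*n : ℕ):ℝ) + 1) / 2)) =
      1 / ((1 + x^2)^n * Real.sqrt (1 + x^2)) := by
    rw [show -((((2*n:ℕ):ℝ)+1)/2) = -((n:ℝ) + 1/2) by push_cast; ring,
      Real.rpow_neg hc.le, Real.rpow_add hc, Real.rpow_natCast, ← Real.sqrt_eq_rpow, one_div]
  rw [hrp]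
  push_cast
  ring
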